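/- On n qubits, let U(φ, ω) = (⊗_{i=1}^n R_X(φ_i)) · (⊗_{i=1}^n R_Y(ω_i)) with R_X(t) = exp(−iXt/2) and R_Y(t) = exp(−iYt/2), let ρ = (|0⟩⟨0|)^{⊗n}, and let L_α(φ, ω) = Tr(U(φ,ω) ρ U(φ,ω)† P_α) with (φ, ω) uniform on [−π,π]^{2n}. Then: (i) for any Pauli string P_α with α_i ∈ {0,1} for all i (an X-string) having k ≥ 1 non-identity factors, Var[L_α] = (1/2)^k; and (ii) for any Pauli string P_α with α_i ∈ {0,3} for all i (a Z-string) having k ≥ 1 non-identity factors, Var[L_α] = (1/4)^k. In particular, the upper bound Var[L_α] ≤ (1/2)^{|α|} and lower bound Var[L_α] ≥ Ω(ρ)(1/4)^{|α|} are saturated by explicit circuit–observable pairs. -/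

import Mathlib

open MeasureTheory Matrix Finset
open scoped ComplexOrder

noncomputable section

/-- The space of `n`-qubit operators: matrices indexed by bitstrings. -/
abbrev QMat (n : ℕ) := Matrix (Fin n → Fin 2) (Fin n → Fin 2) ℂ

/-- The single-qubit Pauli matrices `σ_0 = I`, `σ_1 = X`, `σ_2 = Y`, `σ_3 = Z`. -/
def pauli : Fin 4 → Matrix (Fin 2) (Fin 2) ℂ :=
  ![1, !![0, 1; 1, 0], !![0, -Complex.I; Complex.I, 0], !![1, 0; 0, -1]]

/-- Tensor product `M 0 ⊗ ⋯ ⊗ M (n-1)` of a family of single-qubit operators. -/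
def tensorFamily {n : ℕ} (M : Fin n → Matrix (Fin 2) (Fin 2) ℂ) : QMat n :=
  Matrix.of fun x y => ∏ i, M i (x i) (y i)

/-- The Pauli string `P_α = σ_{α 0} ⊗ ⋯ ⊗ σ_{α (n-1)}`. -/
def pauliString {n : ℕ} (α : Fin n → Fin 4) : QMat n :=
  tensorFamily fun i => pauli (α i)

/-- The single-qubit rotation `R_{σ_a}(t) = exp(-i σ_a t / 2)`. -/
def rot1 (a : Fin 4) (t : ℝ) : Matrix (Fin 2) (Fin 2) ℂ :=
  NormedSpace.exp ((-(Complex.I * (t / 2))) • pauli a)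

/-- The rotation gate `R_P(t) = exp(-i P t / 2)` generated by `P`. -/
def rotGate {n : ℕ} (P : QMat n) (t : ℝ) : QMat n :=
  NormedSpace.exp ((-(Complex.I * (t / 2))) • P)

/-- A Clifford gate: a unitary `W` such that `Wᴴ P_α W` is a Pauli string up to sign. -/
def IsCliffordGate {n : ℕ} (W : QMat n) : Prop :=
  W * Wᴴ = 1 ∧ Wᴴ * W = 1 ∧
    ∀ α : Fin n → Fin 4, ∃ β : Fin n → Fin 4,
      Wᴴ * pauliString α * W = pauliString β ∨ Wᴴ * pauliString α * W = -pauliString β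

/-- The data of an `m`-parameter circuit in the class `𝒰` on `n` qubits:
`U(θ) = A(θ_{2n+1..m}) * B(θ_{n+1..2n}) * C(θ_{1..n})` where `C` and `B` are layers of
single-qubit rotations with pointwise orthogonal (distinct, non-identity) axes `ν`, `μ`, and
`A` is an alternating product of Clifford gates and Pauli-string rotations, one fresh
parameter per rotation. -/
structure Ansatz (n m : ℕ) where
  K : ℕ
  hm : m = 2 * n + K
  ν : Fin n → Fin 4
  μ : Fin n → Fin 4
  hν : ∀ i, ν i ≠ 0
  hμ : ∀ i, μ i ≠ 0
  hμν : ∀ i, μ i ≠ ν i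
  W : Fin K → QMat n
  hW : ∀ k, IsCliffordGate (W k)
  P : Fin K → Fin n → Fin 4

/-- The unitary implemented by the circuit at parameters `θ`. -/
def Ansatz.U {n m : ℕ} (A : Ansatz n m) (θ : Fin m → ℝ) : QMat n :=
  (List.ofFn fun k : Fin A.K =>
      A.W k * rotGate (pauliString (A.P k))
        (θ ⟨2 * n + (k : ℕ), by have h1 := A.hm; have h2 := k.isLt; omega⟩)).prod *
  tensorFamily (fun i => rot1 (A.μ i)
      (θ ⟨n + (i : ℕ), by have h1 := A.hm; have h2 := i.isLt; omega⟩)) *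
  tensorFamily (fun i => rot1 (A.ν i)
      (θ ⟨(i : ℕ), by have h1 := A.hm; have h2 := i.isLt; omega⟩))

/-- `ρ` is a density matrix: positive semidefinite with unit trace. -/
def IsDensityMatrix {n : ℕ} (ρ : QMat n) : Prop :=
  ρ.PosSemidef ∧ ρ.trace = 1

/-- The loss term `L_α(θ) = Tr(U(θ) ρ U(θ)† P_α)` (a real number). -/
def lossTerm {n m : ℕ} (A : Ansatz n m) (ρ : QMat n) (α : Fin n → Fin 4)
    (θ : Fin m → ℝ) : ℝ :=
  ((A.U θ * ρ * (A.U θ)ᴴ * pauliString α).trace).re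

/-- Expectation of `f` with `θ` uniform on `[-π, π]^ι`. -/
def unifExp {ι : Type*} [Fintype ι] (f : (ι → ℝ) → ℝ) : ℝ :=
  (2 * Real.pi)⁻¹ ^ (Fintype.card ι) *
    ∫ θ in Set.univ.pi fun _ : ι => Set.Icc (-Real.pi) Real.pi, f θ

/-- Variance of `f` with `θ` uniform on `[-π, π]^ι`. -/
def unifVar {ι : Type*} [Fintype ι] (f : (ι → ℝ) → ℝ) : ℝ :=
  unifExp (fun θ => f θ ^ 2) - unifExp f ^ 2

/-- The point of `{0, π/2}^ι` encoded by a boolean vector. -/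
def discPt {ι : Type*} (s : ι → Bool) : ι → ℝ :=
  fun i => if s i then Real.pi / 2 else 0

end

/-- The circuit `U(φ, ω) = (⊗_i R_X(φ_i)) · (⊗_i R_Y(ω_i))`, with `θ = (φ, ω) ∈ ℝ^{2n}`
(first `n` coordinates `φ`, last `n` coordinates `ω`). -/
noncomputable def xyCircuit (n : ℕ) (θ : Fin (2 * n) → ℝ) : QMat n :=
  tensorFamily (fun i => rot1 1 (θ ⟨(i : ℕ), by have := i.isLt; omega⟩)) *
  tensorFamily (fun i => rot1 2 (θ ⟨n + (i : ℕ), by have := i.isLt; omega⟩))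

theorem ct2 (p q r s : ℂ) : (!![p,q;r,s])ᴴ = !![star p, star r; star q, star s] := by
  ext i j; fin_cases i <;> fin_cases j <;> simp

-- ===================== auxiliary lemmas =====================
set_option maxHeartbeats 1600000

namespace XYSat

open MeasureTheory Matrix Finset

noncomputable section

theorem tensorFamily_mul {n : ℕ} (M N : Fin n → Matrix (Fin 2) (Fin 2) ℂ) :
    tensorFamily M * tensorFamily N = tensorFamily (fun i => M i * N i) := by
  ext x y
  simp only [tensorFamily, Matrix.mul_apply, Matrix.of_apply, Fintype.prod_sum
    (fun i (j : Fin 2) => M i (x i) j * N i j (y i))]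
  rw [← Finset.sum_congr rfl (fun z _ => Finset.prod_mul_distrib)]

theorem tensorFamily_trace {n : ℕ} (M : Fin n → Matrix (Fin 2) (Fin 2) ℂ) :
    (tensorFamily M).trace = ∏ i, (M i).trace := by
  simp only [Matrix.trace, Matrix.diag, tensorFamily, Matrix.of_apply,
    Fintype.prod_sum (fun i (j : Fin 2) => M i j j)]

theorem tensorFamily_ct {n : ℕ} (M : Fin n → Matrix (Fin 2) (Fin 2) ℂ) :
    (tensorFamily M)ᴴ = tensorFamily (fun i => (M i)ᴴ) := by
  ext x y
  simp [tensorFamily, Matrix.conjTranspose_apply, map_prod]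

theorem diag2 (c : ℂ) : Matrix.diagonal ![c, -c] = !![c,0;0,-c] := by
  ext i j
  fin_cases i <;> fin_cases j <;> simp [Matrix.diagonal_apply]

theorem expX (c : ℂ) : NormedSpace.exp (c • (!![0,1;1,0] : Matrix (Fin 2) (Fin 2) ℂ)) =
    !![Complex.cosh c, Complex.sinh c; Complex.sinh c, Complex.cosh c] := by
  have hH : (!![1,1;1,-1] : Matrix (Fin 2) (Fin 2) ℂ)⁻¹ = !![1/2,1/2;1/2,-1/2] := by
    apply Matrix.inv_eq_right_inv
    ext i j
    fin_cases i <;> fin_cases j <;>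
      simp [Matrix.mul_apply, Fin.sum_univ_two, Matrix.one_apply] <;> norm_num
  have hU : IsUnit (!![1,1;1,-1] : Matrix (Fin 2) (Fin 2) ℂ) := by
    rw [Matrix.isUnit_iff_isUnit_det, Matrix.det_fin_two_of]; norm_num
  have hconj : c • (!![0,1;1,0] : Matrix (Fin 2) (Fin 2) ℂ) =
      !![1,1;1,-1] * Matrix.diagonal ![c, -c] * (!![1,1;1,-1]:Matrix (Fin 2) (Fin 2) ℂ)⁻¹ := by
    rw [hH, diag2]
    ext i j
    fin_cases i <;> fin_cases j <;>
      simp [Matrix.mul_apply, Fin.sum_univ_two] <;> ring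
  rw [hconj, Matrix.exp_conj _ _ hU, Matrix.exp_diagonal, hH]
  have hv : NormedSpace.exp (![c, -c]) = ![Complex.exp c, Complex.exp (-c)] := by
    funext i
    rw [Pi.exp_def, ← Complex.exp_eq_exp_ℂ]
    fin_cases i <;> simp
  have hd : Matrix.diagonal ![Complex.exp c, Complex.exp (-c)] =
      !![Complex.exp c, 0; 0, Complex.exp (-c)] := by
    ext i j; fin_cases i <;> fin_cases j <;> simp [Matrix.diagonal_apply]
  rw [hv, hd]
  ext i j
  fin_cases i <;> fin_cases j <;>
    simp [Matrix.mul_apply, Fin.sum_univ_two, Complex.cosh, Complex.sinh] <;> ring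

theorem expY (c : ℂ) :
    NormedSpace.exp (c • (!![0,-Complex.I;Complex.I,0] : Matrix (Fin 2) (Fin 2) ℂ)) =
    !![Complex.cosh c, -Complex.I * Complex.sinh c;
       Complex.I * Complex.sinh c, Complex.cosh c] := by
  have hH : (!![1,1;Complex.I,-Complex.I] : Matrix (Fin 2) (Fin 2) ℂ)⁻¹ =
      !![1/2, -Complex.I/2; 1/2, Complex.I/2] := by
    apply Matrix.inv_eq_right_inv
    ext i j
    fin_cases i <;> fin_cases j <;>
      simp [Matrix.mul_apply, Fin.sum_univ_two, Matrix.one_apply] <;> ring_nf <;>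
      simp [Complex.I_sq] <;> norm_num
  have hU : IsUnit (!![1,1;Complex.I,-Complex.I] : Matrix (Fin 2) (Fin 2) ℂ) := by
    rw [Matrix.isUnit_iff_isUnit_det, Matrix.det_fin_two_of]
    simp [Complex.ext_iff]
    norm_num
  have hconj : c • (!![0,-Complex.I;Complex.I,0] : Matrix (Fin 2) (Fin 2) ℂ) =
      !![1,1;Complex.I,-Complex.I] * Matrix.diagonal ![c, -c] *
        (!![1,1;Complex.I,-Complex.I]:Matrix (Fin 2) (Fin 2) ℂ)⁻¹ := by
    rw [hH, diag2]
    ext i j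
    fin_cases i <;> fin_cases j <;>
      simp [Matrix.mul_apply, Fin.sum_univ_two] <;> ring_nf <;>
      simp [Complex.I_sq] <;> ring
  rw [hconj, Matrix.exp_conj _ _ hU, Matrix.exp_diagonal, hH]
  have hv : NormedSpace.exp (![c, -c]) = ![Complex.exp c, Complex.exp (-c)] := by
    funext i
    rw [Pi.exp_def, ← Complex.exp_eq_exp_ℂ]
    fin_cases i <;> simp
  have hd : Matrix.diagonal ![Complex.exp c, Complex.exp (-c)] =
      !![Complex.exp c, 0; 0, Complex.exp (-c)] := by
    ext i j; fin_cases i <;> fin_cases j <;> simp [Matrix.diagonal_apply]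
  rw [hv, hd]
  ext i j
  fin_cases i <;> fin_cases j <;>
    simp [Matrix.mul_apply, Fin.sum_univ_two, Complex.cosh, Complex.sinh] <;>
    ring_nf <;> simp [Complex.I_sq] <;> ring

theorem rotX_eq (t : ℝ) : rot1 1 t =
    !![(Real.cos (t/2) : ℂ), -Complex.I * Real.sin (t/2);
       -Complex.I * Real.sin (t/2), (Real.cos (t/2) : ℂ)] := by
  have hc : (-(Complex.I * (t / 2))) = ((-(t/2) : ℝ) : ℂ) * Complex.I := by
    push_cast; ring
  have h1 : pauli 1 = !![0,1;1,0] := rfl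
  rw [rot1, h1, hc, expX, Complex.cosh_mul_I, Complex.sinh_mul_I]
  rw [← Complex.ofReal_cos, ← Complex.ofReal_sin]
  rw [Real.cos_neg, Real.sin_neg]
  ext i j
  fin_cases i <;> fin_cases j <;> simp <;> ring

theorem rotY_eq (t : ℝ) : rot1 2 t =
    !![(Real.cos (t/2) : ℂ), -(Real.sin (t/2) : ℂ);
       (Real.sin (t/2) : ℂ), (Real.cos (t/2) : ℂ)] := by
  have hc : (-(Complex.I * (t / 2))) = ((-(t/2) : ℝ) : ℂ) * Complex.I := by
    push_cast; ring
  have h1 : pauli 2 = !![0,-Complex.I;Complex.I,0] := rfl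
  rw [rot1, h1, hc, expY, Complex.cosh_mul_I, Complex.sinh_mul_I]
  rw [← Complex.ofReal_cos, ← Complex.ofReal_sin]
  rw [Real.cos_neg, Real.sin_neg]
  ext i j
  fin_cases i <;> fin_cases j <;> simp <;> ring_nf <;> simp [Complex.I_sq]

/-- The per-qubit value of the loss observable. -/
def qval (a : Fin 4) (φ ω : ℝ) : ℝ :=
  if a = 1 then Real.sin ω else if a = 3 then Real.cos φ * Real.cos ω else 1

theorem qt0 (a b c d : ℝ) (h1 : a^2+b^2 = 1) (h2 : c^2+d^2 = 1) :
    ((!![(a:ℂ), -Complex.I*b; -Complex.I*b, (a:ℂ)] * !![(c:ℂ), -(d:ℂ); (d:ℂ), (c:ℂ)]) *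
      !![1,0;0,0] *
      (!![(a:ℂ), -Complex.I*b; -Complex.I*b, (a:ℂ)] *
        !![(c:ℂ), -(d:ℂ); (d:ℂ), (c:ℂ)])ᴴ * !![1,0;0,1]).trace = 1 := by
  have h1' : ((a:ℂ))^2 + ((b:ℂ))^2 = 1 := by exact_mod_cast congrArg (Complex.ofReal) h1
  have h2' : ((c:ℂ))^2 + ((d:ℂ))^2 = 1 := by exact_mod_cast congrArg (Complex.ofReal) h2
  simp only [Matrix.mul_fin_two, ct2, Matrix.trace_fin_two_of,
    Complex.star_def, _root_.map_mul, map_add, map_sub, map_neg, Complex.conj_ofReal,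
    Complex.conj_I, _root_.map_one, map_zero]
  push_cast
  ring_nf
  try simp only [Complex.I_sq]
  linear_combination ((c:ℂ)^2+(d:ℂ)^2) * h1' + h2'

theorem qt1 (a b c d : ℝ) (h1 : a^2+b^2 = 1) :
    ((!![(a:ℂ), -Complex.I*b; -Complex.I*b, (a:ℂ)] * !![(c:ℂ), -(d:ℂ); (d:ℂ), (c:ℂ)]) *
      !![1,0;0,0] *
      (!![(a:ℂ), -Complex.I*b; -Complex.I*b, (a:ℂ)] *
        !![(c:ℂ), -(d:ℂ); (d:ℂ), (c:ℂ)])ᴴ * !![0,1;1,0]).trace = ((2*d*c : ℝ) : ℂ) := by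
  have h1' : ((a:ℂ))^2 + ((b:ℂ))^2 = 1 := by exact_mod_cast congrArg (Complex.ofReal) h1
  simp only [Matrix.mul_fin_two, ct2, Matrix.trace_fin_two_of,
    Complex.star_def, _root_.map_mul, map_add, map_sub, map_neg, Complex.conj_ofReal,
    Complex.conj_I, _root_.map_one, map_zero]
  push_cast
  ring_nf
  try simp only [Complex.I_sq]
  linear_combination (2 * (d:ℂ) * (c:ℂ)) * h1'

theorem qt3 (a b c d : ℝ) (h1 : a^2+b^2 = 1) (h2 : c^2+d^2 = 1) :
    ((!![(a:ℂ), -Complex.I*b; -Complex.I*b, (a:ℂ)] * !![(c:ℂ), -(d:ℂ); (d:ℂ), (c:ℂ)]) *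
      !![1,0;0,0] *
      (!![(a:ℂ), -Complex.I*b; -Complex.I*b, (a:ℂ)] *
        !![(c:ℂ), -(d:ℂ); (d:ℂ), (c:ℂ)])ᴴ * !![1,0;0,-1]).trace
      = (((2*a^2-1)*(2*c^2-1) : ℝ) : ℂ) := by
  have h1' : ((a:ℂ))^2 + ((b:ℂ))^2 = 1 := by exact_mod_cast congrArg (Complex.ofReal) h1
  have h2' : ((c:ℂ))^2 + ((d:ℂ))^2 = 1 := by exact_mod_cast congrArg (Complex.ofReal) h2
  simp only [Matrix.mul_fin_two, ct2, Matrix.trace_fin_two_of,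
    Complex.star_def, _root_.map_mul, map_add, map_sub, map_neg, Complex.conj_ofReal,
    Complex.conj_I, _root_.map_one, map_zero]
  push_cast
  ring_nf
  try simp only [Complex.I_sq]
  linear_combination ((d:ℂ)^2-(c:ℂ)^2) * h1' + (1-2*(a:ℂ)^2) * h2'

theorem qubit_trace (a : Fin 4) (ha : a = 0 ∨ a = 1 ∨ a = 3) (φ ω : ℝ) :
    (rot1 1 φ * rot1 2 ω * !![1,0;0,0] * (rot1 1 φ * rot1 2 ω)ᴴ * pauli a).trace
      = ((qval a φ ω : ℝ) : ℂ) := by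
  have h1 : Real.cos (φ/2)^2 + Real.sin (φ/2)^2 = 1 := by
    linarith [Real.sin_sq_add_cos_sq (φ/2)]
  have h2 : Real.cos (ω/2)^2 + Real.sin (ω/2)^2 = 1 := by
    linarith [Real.sin_sq_add_cos_sq (ω/2)]
  rcases ha with h|h|h <;> subst h
  · rw [show pauli 0 = !![1,0;0,1] by
      rw [show pauli 0 = (1 : Matrix (Fin 2) (Fin 2) ℂ) from rfl, Matrix.one_fin_two]]
    rw [rotX_eq, rotY_eq, show qval 0 φ ω = 1 from rfl]
    rw [show ((1:ℝ):ℂ) = 1 from rfl]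
    exact qt0 _ _ _ _ h1 h2
  · rw [show pauli 1 = !![0,1;1,0] from rfl]
    rw [rotX_eq, rotY_eq]
    rw [show qval 1 φ ω = 2 * Real.sin (ω/2) * Real.cos (ω/2) by
      rw [show qval 1 φ ω = Real.sin ω from rfl, ← Real.sin_two_mul]; congr 1; ring]
    rw [show (2 : ℝ) * Real.sin (ω/2) * Real.cos (ω/2) = 2 * Real.sin (ω/2) * Real.cos (ω/2)
      from rfl]
    exact qt1 _ _ _ _ h1
  · rw [show pauli 3 = !![1,0;0,-1] from rfl]
    rw [rotX_eq, rotY_eq]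
    rw [show qval 3 φ ω = (2*Real.cos (φ/2)^2-1)*(2*Real.cos (ω/2)^2-1) by
      rw [show qval 3 φ ω = Real.cos φ * Real.cos ω from rfl]
      rw [show Real.cos φ = 2*Real.cos (φ/2)^2-1 by rw [← Real.cos_two_mul]; congr 1; ring]
      rw [show Real.cos ω = 2*Real.cos (ω/2)^2-1 by rw [← Real.cos_two_mul]; congr 1; ring]]
    exact qt3 _ _ _ _ h1 h2

theorem traceProd {n : ℕ} (α : Fin n → Fin 4) (hα : ∀ i, α i = 0 ∨ α i = 1 ∨ α i = 3)
    (θ : Fin (2*n) → ℝ) :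
    (xyCircuit n θ * tensorFamily (fun _ => !![1, 0; 0, 0]) * (xyCircuit n θ)ᴴ *
        pauliString α).trace
      = ((∏ i : Fin n, qval (α i) (θ ⟨(i:ℕ), by have := i.isLt; omega⟩)
          (θ ⟨n+(i:ℕ), by have := i.isLt; omega⟩) : ℝ) : ℂ) := by
  rw [xyCircuit, tensorFamily_mul, pauliString, tensorFamily_ct, tensorFamily_mul,
    tensorFamily_mul, tensorFamily_mul, tensorFamily_trace, Complex.ofReal_prod]
  exact Finset.prod_congr rfl fun i _ => qubit_trace (α i) (hα i) _ _

theorem prod_split {n : ℕ} {M : Type*} [CommMonoid M] (f : Fin (2*n) → M) :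
    ∏ j, f j = (∏ i : Fin n, f ⟨(i:ℕ), by have := i.isLt; omega⟩) *
      ∏ i : Fin n, f ⟨n+(i:ℕ), by have := i.isLt; omega⟩ := by
  calc ∏ j, f j = ∏ j : Fin (n+n), f (Fin.cast (two_mul n).symm j) :=
        (Fintype.prod_equiv (finCongr (two_mul n).symm) _ f (fun x => rfl)).symm
    _ = _ := by rw [Fin.prod_univ_add]; rfl

def idx {n : ℕ} (j : Fin (2*n)) : Fin n :=
  if hj : (j:ℕ) < n then ⟨j, hj⟩ else ⟨(j:ℕ) - n, by have := j.isLt; omega⟩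

theorem idx_lo {n : ℕ} (i : Fin n) (pf : (i:ℕ) < 2*n) :
    idx (⟨(i:ℕ), pf⟩ : Fin (2*n)) = i := by
  rw [idx, dif_pos i.isLt]

theorem idx_hi {n : ℕ} (i : Fin n) (pf : n+(i:ℕ) < 2*n) :
    idx (⟨n+(i:ℕ), pf⟩ : Fin (2*n)) = i := by
  rw [idx, dif_neg (Nat.not_lt.mpr (Nat.le_add_right n i))]
  ext
  simp

theorem unifExp_pi {m : ℕ} (h : Fin m → ℝ → ℝ) :
    unifExp (fun θ : Fin m → ℝ => ∏ j, h j (θ j)) =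
      ∏ j, ((2*Real.pi)⁻¹ * ∫ t in Set.Icc (-Real.pi) Real.pi, h j t) := by
  have hind : (Set.univ.pi fun _ : Fin m => Set.Icc (-Real.pi) Real.pi).indicator
        (fun θ : Fin m → ℝ => ∏ j, h j (θ j))
      = fun θ => ∏ j, (Set.Icc (-Real.pi) Real.pi).indicator (h j) (θ j) := by
    funext θ
    by_cases hθ : θ ∈ Set.univ.pi fun _ : Fin m => Set.Icc (-Real.pi) Real.pi
    · rw [Set.indicator_of_mem hθ]
      exact Finset.prod_congr rfl fun j _ => (Set.indicator_of_mem (hθ j trivial) _).symm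
    · rw [Set.indicator_of_notMem hθ]
      rw [Set.mem_univ_pi] at hθ; push_neg at hθ
      obtain ⟨j, hj⟩ := hθ
      exact (Finset.prod_eq_zero (Finset.mem_univ j) (Set.indicator_of_notMem hj _)).symm
  rw [unifExp,
    ← MeasureTheory.integral_indicator (MeasurableSet.univ_pi fun _ => measurableSet_Icc), hind,
    MeasureTheory.integral_fintype_prod_volume_eq_prod
      (f := fun j => (Set.Icc (-Real.pi) Real.pi).indicator (h j))]
  simp_rw [MeasureTheory.integral_indicator measurableSet_Icc]
  rw [Finset.prod_mul_distrib, Finset.prod_const, Finset.card_univ, Fintype.card_fin]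

theorem int_one : ∫ t in Set.Icc (-Real.pi) Real.pi, (1:ℝ) = 2*Real.pi := by
  rw [MeasureTheory.integral_Icc_eq_integral_Ioc,
    ← intervalIntegral.integral_of_le (by linarith [Real.pi_pos]),
    intervalIntegral.integral_const]
  simp
  ring

theorem int_sin : ∫ t in Set.Icc (-Real.pi) Real.pi, Real.sin t = 0 := by
  rw [MeasureTheory.integral_Icc_eq_integral_Ioc,
    ← intervalIntegral.integral_of_le (by linarith [Real.pi_pos]), integral_sin]
  simp

theorem int_cos : ∫ t in Set.Icc (-Real.pi) Real.pi, Real.cos t = 0 := by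
  rw [MeasureTheory.integral_Icc_eq_integral_Ioc,
    ← intervalIntegral.integral_of_le (by linarith [Real.pi_pos]), integral_cos]
  simp

theorem int_sin_sq : ∫ t in Set.Icc (-Real.pi) Real.pi, Real.sin t ^ 2 = Real.pi := by
  rw [MeasureTheory.integral_Icc_eq_integral_Ioc,
    ← intervalIntegral.integral_of_le (by linarith [Real.pi_pos]), integral_sin_sq]
  simp

theorem int_cos_sq : ∫ t in Set.Icc (-Real.pi) Real.pi, Real.cos t ^ 2 = Real.pi := by
  rw [MeasureTheory.integral_Icc_eq_integral_Ioc,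
    ← intervalIntegral.integral_of_le (by linarith [Real.pi_pos]), integral_cos_sq]
  simp

theorem twopi_inv_one : (2*Real.pi)⁻¹ * (2*Real.pi) = 1 :=
  inv_mul_cancel₀ (by positivity)

theorem twopi_inv_half : (2*Real.pi)⁻¹ * Real.pi = 1/2 := by
  have := Real.pi_ne_zero
  field_simp

/-- per-coordinate factor for the X-string case. -/
def hXf {n : ℕ} (α : Fin n → Fin 4) (j : Fin (2*n)) (t : ℝ) : ℝ :=
  if n ≤ (j:ℕ) ∧ α (idx j) ≠ 0 then Real.sin t else 1

/-- per-coordinate factor for the Z-string case. -/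
def hZf {n : ℕ} (α : Fin n → Fin 4) (j : Fin (2*n)) (t : ℝ) : ℝ :=
  if α (idx j) ≠ 0 then Real.cos t else 1

theorem intf_hXf {n : ℕ} (α : Fin n → Fin 4) (j : Fin (2*n)) :
    (2*Real.pi)⁻¹ * ∫ t in Set.Icc (-Real.pi) Real.pi, hXf α j t =
      if n ≤ (j:ℕ) ∧ α (idx j) ≠ 0 then 0 else 1 := by
  by_cases hc : n ≤ (j:ℕ) ∧ α (idx j) ≠ 0
  · rw [if_pos hc, show (fun t => hXf α j t) = Real.sin from funext fun t => if_pos hc,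
      int_sin, mul_zero]
  · rw [if_neg hc, show (fun t => hXf α j t) = (fun _ => (1:ℝ)) from funext fun t => if_neg hc,
      int_one, twopi_inv_one]

theorem intf_hXf_sq {n : ℕ} (α : Fin n → Fin 4) (j : Fin (2*n)) :
    (2*Real.pi)⁻¹ * ∫ t in Set.Icc (-Real.pi) Real.pi, hXf α j t ^ 2 =
      if n ≤ (j:ℕ) ∧ α (idx j) ≠ 0 then 1/2 else 1 := by
  by_cases hc : n ≤ (j:ℕ) ∧ α (idx j) ≠ 0
  · rw [if_pos hc,
      show (fun t => hXf α j t ^ 2) = (fun t => Real.sin t ^ 2) from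
        funext fun t => by rw [show hXf α j t = Real.sin t from if_pos hc],
      int_sin_sq, twopi_inv_half]
  · rw [if_neg hc,
      show (fun t => hXf α j t ^ 2) = (fun _ => (1:ℝ)) from
        funext fun t => by rw [show hXf α j t = 1 from if_neg hc]; norm_num,
      int_one, twopi_inv_one]

theorem intf_hZf {n : ℕ} (α : Fin n → Fin 4) (j : Fin (2*n)) :
    (2*Real.pi)⁻¹ * ∫ t in Set.Icc (-Real.pi) Real.pi, hZf α j t =
      if α (idx j) ≠ 0 then 0 else 1 := by
  by_cases hc : α (idx j) ≠ 0
  · rw [if_pos hc, show (fun t => hZf α j t) = Real.cos from funext fun t => if_pos hc,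
      int_cos, mul_zero]
  · rw [if_neg hc, show (fun t => hZf α j t) = (fun _ => (1:ℝ)) from funext fun t => if_neg hc,
      int_one, twopi_inv_one]

theorem intf_hZf_sq {n : ℕ} (α : Fin n → Fin 4) (j : Fin (2*n)) :
    (2*Real.pi)⁻¹ * ∫ t in Set.Icc (-Real.pi) Real.pi, hZf α j t ^ 2 =
      if α (idx j) ≠ 0 then 1/2 else 1 := by
  by_cases hc : α (idx j) ≠ 0
  · rw [if_pos hc,
      show (fun t => hZf α j t ^ 2) = (fun t => Real.cos t ^ 2) from
        funext fun t => by rw [show hZf α j t = Real.cos t from if_pos hc],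
      int_cos_sq, twopi_inv_half]
  · rw [if_neg hc,
      show (fun t => hZf α j t ^ 2) = (fun _ => (1:ℝ)) from
        funext fun t => by rw [show hZf α j t = 1 from if_neg hc]; norm_num,
      int_one, twopi_inv_one]

end

end XYSat

/-- For `U(φ,ω) = (⊗ R_X(φ_i)) (⊗ R_Y(ω_i))` and `ρ = (|0⟩⟨0|)^{⊗n}`,
with `(φ, ω)` uniform on `[-π,π]^{2n}`: (i) for any X-string `P_α` (all `α_i ∈ {0,1}`) with
`k ≥ 1` non-identity factors, `Var[L_α] = (1/2)^k`; (ii) for any Z-string `P_α` (all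
`α_i ∈ {0,3}`) with `k ≥ 1` non-identity factors, `Var[L_α] = (1/4)^k`. In particular the
upper bound `(1/2)^{|α|}` and lower bound `Ω(ρ)(1/4)^{|α|}` of the main theorem are
saturated by explicit circuit–observable pairs. -/
theorem xyCircuit_variance_saturates_bounds (n : ℕ) (α : Fin n → Fin 4) (k : ℕ)
    (hk : k = (Finset.univ.filter fun i => α i ≠ 0).card) (hk1 : 1 ≤ k) :
    ((∀ i, α i = 0 ∨ α i = 1) →
      unifVar (fun θ : Fin (2 * n) → ℝ =>
        ((xyCircuit n θ * tensorFamily (fun _ => !![1, 0; 0, 0]) * (xyCircuit n θ)ᴴ *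
          pauliString α).trace).re) = (1 / 2 : ℝ) ^ k) ∧
    ((∀ i, α i = 0 ∨ α i = 3) →
      unifVar (fun θ : Fin (2 * n) → ℝ =>
        ((xyCircuit n θ * tensorFamily (fun _ => !![1, 0; 0, 0]) * (xyCircuit n θ)ᴴ *
          pauliString α).trace).re) = (1 / 4 : ℝ) ^ k) := by
  have hcount : (∏ i : Fin n, if α i ≠ 0 then (1/2:ℝ) else 1) = (1/2:ℝ)^k := by
    rw [Finset.prod_ite (fun _ => (1/2:ℝ)) (fun _ => (1:ℝ)), Finset.prod_const,
      Finset.prod_const_one, mul_one, hk]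
  have hne : (Finset.univ.filter fun i => α i ≠ 0).Nonempty := Finset.card_pos.mp (by omega)
  obtain ⟨i0, hmem⟩ := hne
  have hi0 : α i0 ≠ 0 := (Finset.mem_filter.mp hmem).2
  constructor
  · -- X-string case
    intro hα
    have hα' : ∀ i, α i = 0 ∨ α i = 1 ∨ α i = 3 := fun i =>
      (hα i).elim Or.inl (fun h => Or.inr (Or.inl h))
    have hfun : ∀ θ : Fin (2 * n) → ℝ,
        ((xyCircuit n θ * tensorFamily (fun _ => !![1, 0; 0, 0]) * (xyCircuit n θ)ᴴ *
          pauliString α).trace).re = ∏ j, XYSat.hXf α j (θ j) := by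
      intro θ
      rw [XYSat.traceProd α hα' θ, Complex.ofReal_re,
        XYSat.prod_split (f := fun j => XYSat.hXf α j (θ j))]
      have hlow : (∏ i : Fin n,
          XYSat.hXf α ⟨(i:ℕ), by have := i.isLt; omega⟩
            (θ ⟨(i:ℕ), by have := i.isLt; omega⟩)) = 1 :=
        Finset.prod_eq_one fun i _ => if_neg fun hcon => absurd hcon.1 (Nat.not_le.mpr i.isLt)
      rw [hlow, one_mul]
      refine Finset.prod_congr rfl fun i _ => ?_
      rcases hα i with h|h
      · simp [XYSat.qval, XYSat.hXf, XYSat.idx_hi, h]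
      · simp [XYSat.qval, XYSat.hXf, XYSat.idx_hi, h, Nat.le_add_right,
          show (1:Fin 4) ≠ 0 by decide, show (1:Fin 4) = 1 from rfl]
    rw [unifVar]
    simp only [hfun]
    have hsq : (fun θ : Fin (2*n) → ℝ => (∏ j, XYSat.hXf α j (θ j)) ^ 2) =
        fun θ => ∏ j, XYSat.hXf α j (θ j) ^ 2 := funext fun θ => (Finset.prod_pow _ _ _).symm
    rw [hsq,
      show unifExp (fun θ : Fin (2*n) → ℝ => ∏ j, XYSat.hXf α j (θ j) ^ 2) = _ from
        XYSat.unifExp_pi (fun j t => XYSat.hXf α j t ^ 2),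
      show unifExp (fun θ : Fin (2*n) → ℝ => ∏ j, XYSat.hXf α j (θ j)) = _ from
        XYSat.unifExp_pi (fun j t => XYSat.hXf α j t)]
    have hEzero : (∏ j : Fin (2*n),
        ((2*Real.pi)⁻¹ * ∫ t in Set.Icc (-Real.pi) Real.pi, XYSat.hXf α j t)) = 0 := by
      refine Finset.prod_eq_zero
        (Finset.mem_univ (⟨n+(i0:ℕ), by have := i0.isLt; omega⟩ : Fin (2*n))) ?_
      rw [XYSat.intf_hXf, if_pos ⟨Nat.le_add_right n i0, by rw [XYSat.idx_hi]; exact hi0⟩]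
    have hEsq : (∏ j : Fin (2*n),
        ((2*Real.pi)⁻¹ * ∫ t in Set.Icc (-Real.pi) Real.pi, XYSat.hXf α j t ^ 2)) =
        (1/2:ℝ)^k := by
      calc (∏ j : Fin (2*n),
            ((2*Real.pi)⁻¹ * ∫ t in Set.Icc (-Real.pi) Real.pi, XYSat.hXf α j t ^ 2))
          = ∏ j : Fin (2*n), (if n ≤ (j:ℕ) ∧ α (XYSat.idx j) ≠ 0 then (1/2:ℝ) else 1) :=
            Finset.prod_congr rfl fun j _ => XYSat.intf_hXf_sq α j
        _ = (∏ _i : Fin n, (1:ℝ)) * ∏ i : Fin n, (if α i ≠ 0 then (1/2:ℝ) else 1) := by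
            rw [XYSat.prod_split
              (f := fun j => if n ≤ (j:ℕ) ∧ α (XYSat.idx j) ≠ 0 then (1/2:ℝ) else 1)]
            congr 1
            · exact Finset.prod_congr rfl fun i _ =>
                if_neg fun hcon => absurd hcon.1 (Nat.not_le.mpr i.isLt)
            · refine Finset.prod_congr rfl fun i _ => ?_
              by_cases h0 : α i ≠ 0
              · rw [if_pos ⟨Nat.le_add_right n i, by rw [XYSat.idx_hi]; exact h0⟩, if_pos h0]
              · rw [if_neg (fun hcon => h0 (by have := hcon.2; rwa [XYSat.idx_hi] at this)),
                  if_neg h0]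
        _ = (1/2:ℝ)^k := by rw [Finset.prod_const_one, one_mul, hcount]
    rw [hEzero, hEsq]
    norm_num
  · -- Z-string case
    intro hα
    have hα' : ∀ i, α i = 0 ∨ α i = 1 ∨ α i = 3 := fun i =>
      (hα i).elim Or.inl (fun h => Or.inr (Or.inr h))
    have hfun : ∀ θ : Fin (2 * n) → ℝ,
        ((xyCircuit n θ * tensorFamily (fun _ => !![1, 0; 0, 0]) * (xyCircuit n θ)ᴴ *
          pauliString α).trace).re = ∏ j, XYSat.hZf α j (θ j) := by
      intro θ
      rw [XYSat.traceProd α hα' θ, Complex.ofReal_re,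
        XYSat.prod_split (f := fun j => XYSat.hZf α j (θ j)), ← Finset.prod_mul_distrib]
      refine Finset.prod_congr rfl fun i _ => ?_
      rcases hα i with h|h
      · simp [XYSat.qval, XYSat.hZf, XYSat.idx_lo, XYSat.idx_hi, h]
      · simp [XYSat.qval, XYSat.hZf, XYSat.idx_lo, XYSat.idx_hi, h,
          show (3:Fin 4) ≠ 0 by decide, show (3:Fin 4) ≠ 1 by decide,
          show (3:Fin 4) = 3 from rfl]
    rw [unifVar]
    simp only [hfun]
    have hsq : (fun θ : Fin (2*n) → ℝ => (∏ j, XYSat.hZf α j (θ j)) ^ 2) =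
        fun θ => ∏ j, XYSat.hZf α j (θ j) ^ 2 := funext fun θ => (Finset.prod_pow _ _ _).symm
    rw [hsq,
      show unifExp (fun θ : Fin (2*n) → ℝ => ∏ j, XYSat.hZf α j (θ j) ^ 2) = _ from
        XYSat.unifExp_pi (fun j t => XYSat.hZf α j t ^ 2),
      show unifExp (fun θ : Fin (2*n) → ℝ => ∏ j, XYSat.hZf α j (θ j)) = _ from
        XYSat.unifExp_pi (fun j t => XYSat.hZf α j t)]
    have hEzero : (∏ j : Fin (2*n),
        ((2*Real.pi)⁻¹ * ∫ t in Set.Icc (-Real.pi) Real.pi, XYSat.hZf α j t)) = 0 := by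
      refine Finset.prod_eq_zero
        (Finset.mem_univ (⟨(i0:ℕ), by have := i0.isLt; omega⟩ : Fin (2*n))) ?_
      rw [XYSat.intf_hZf, if_pos (by rw [XYSat.idx_lo]; exact hi0)]
    have hEsq : (∏ j : Fin (2*n),
        ((2*Real.pi)⁻¹ * ∫ t in Set.Icc (-Real.pi) Real.pi, XYSat.hZf α j t ^ 2)) =
        (1/4:ℝ)^k := by
      calc (∏ j : Fin (2*n),
            ((2*Real.pi)⁻¹ * ∫ t in Set.Icc (-Real.pi) Real.pi, XYSat.hZf α j t ^ 2))
          = ∏ j : Fin (2*n), (if α (XYSat.idx j) ≠ 0 then (1/2:ℝ) else 1) :=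
            Finset.prod_congr rfl fun j _ => XYSat.intf_hZf_sq α j
        _ = (∏ i : Fin n, (if α i ≠ 0 then (1/2:ℝ) else 1)) *
              ∏ i : Fin n, (if α i ≠ 0 then (1/2:ℝ) else 1) := by
            rw [XYSat.prod_split (f := fun j => if α (XYSat.idx j) ≠ 0 then (1/2:ℝ) else 1)]
            congr 1
            · exact Finset.prod_congr rfl fun i _ => by rw [XYSat.idx_lo]
            · exact Finset.prod_congr rfl fun i _ => by rw [XYSat.idx_hi]
        _ = (1/4:ℝ)^k := by rw [hcount, ← mul_pow]; norm_num
    rw [hEzero, hEsq]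
    norm_num
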